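/- UMAS exclusion implies revealed preference: consider an expected-utility maximizer with distinct utilities U_0 = 0 < ... over schools, who chooses a ranked list P of at most K schools to maximize Σ_u U_{P^u} L^P_u, where L^P_u is the probability that P^u is the lowest-indexed listed school whose cutoff the agent's score clears. Suppose schools d, e satisfy: the event {agent clears cutoff of d} is contained in {agent clears cutoff of e}, and swapping e for d in any list strictly changes at least one assignment probability whenever d is listed after position n with n < |P|, or changes L^P_n or L^P_0 when n = |P|. If the optimal list P contains d but not e, then U_d > U_e. -/

import Mathlib

open MeasureTheory Set

/-- The event that the agent's score at school `j` clears the (random) cutoff. -/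
def clearSet {Ω J : Type*} (C : J → Ω → ℝ) (s : J → ℝ) (j : J) : Set Ω :=
  {ω | C j ω ≤ s j}

/-- `L^P_u` for `u ≥ 1` (here 0-indexed): the probability that the school in position
`u` of the list `p` is the lowest-ranked listed school whose cutoff the agent clears. -/
noncomputable def assignProb {Ω J : Type*} [MeasurableSpace Ω] (μ : Measure Ω)
    (C : J → Ω → ℝ) (s : J → ℝ) (d₀ : J) (p : List J) (u : ℕ) : ℝ :=
  (μ ((⋂ v ∈ Finset.range u, (clearSet C s (p.getD v d₀))ᶜ) ∩
      clearSet C s (p.getD u d₀))).toReal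

/-- `L^P_0`: the probability of remaining unassigned (taking the outside option). -/
noncomputable def outsideProb {Ω J : Type*} [MeasurableSpace Ω] (μ : Measure Ω)
    (C : J → Ω → ℝ) (s : J → ℝ) (d₀ : J) (p : List J) : ℝ :=
  (μ (⋂ v ∈ Finset.range p.length, (clearSet C s (p.getD v d₀))ᶜ)).toReal

/-- Expected utility of submitting the ranked list `p` (the outside option has
utility `0`). -/
noncomputable def expUtil {Ω J : Type*} [MeasurableSpace Ω] (μ : Measure Ω)
    (C : J → Ω → ℝ) (s : J → ℝ) (d₀ : J) (U : J → ℝ) (p : List J) : ℝ :=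
  ∑ u ∈ Finset.range p.length, U (p.getD u d₀) * assignProb μ C s d₀ p u

lemma partition_sum {Ω : Type*} [MeasurableSpace Ω] (μ : Measure Ω)
    (g : ℕ → Set Ω) (hg : ∀ u, MeasurableSet (g u)) (k : ℕ) :
    (∑ u ∈ Finset.range k, μ ((⋂ v ∈ Finset.range u, (g v)ᶜ) ∩ g u)) +
      μ (⋂ v ∈ Finset.range k, (g v)ᶜ) = μ Set.univ := by
  induction k with
  | zero => simp
  | succ k ih =>
    have hB : (⋂ v ∈ Finset.range (k+1), (g v)ᶜ) =
        (⋂ v ∈ Finset.range k, (g v)ᶜ) \ g k := by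
      ext ω
      simp only [Finset.range_add_one, Finset.mem_insert, Set.mem_iInter, Set.mem_diff,
        Set.mem_compl_iff]
      constructor
      · intro h; exact ⟨fun v hv => h v (Or.inr hv), h k (Or.inl rfl)⟩
      · rintro ⟨h1, h2⟩ v hv; rcases hv with rfl | hv; exacts [h2, h1 v hv]
    rw [Finset.sum_range_succ, hB, add_assoc, measure_inter_add_diff _ (hg k), ih]

lemma partition_sum_real' {Ω : Type*} [MeasurableSpace Ω] (μ : Measure Ω)
    [IsProbabilityMeasure μ]
    (g : ℕ → Set Ω) (hg : ∀ u, MeasurableSet (g u)) (k : ℕ) :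
    (∑ u ∈ Finset.range k, (μ ((⋂ v ∈ Finset.range u, (g v)ᶜ) ∩ g u)).toReal) +
      (μ (⋂ v ∈ Finset.range k, (g v)ᶜ)).toReal = 1 := by
  have h2 := congrArg ENNReal.toReal (partition_sum μ g hg k)
  rw [measure_univ, ENNReal.toReal_one,
    ENNReal.toReal_add (by exact ENNReal.sum_ne_top.mpr fun a _ => measure_ne_top μ _)
      (measure_ne_top μ _),
    ENNReal.toReal_sum (fun a _ => measure_ne_top μ _)] at h2
  exact h2

lemma toReal_le_of_diff_null' {Ω : Type*} [MeasurableSpace Ω] (μ : Measure Ω)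
    [IsFiniteMeasure μ] {A B : Set Ω} (h : μ (A \ B) = 0) :
    (μ A).toReal ≤ (μ B).toReal :=
  ENNReal.toReal_mono (measure_ne_top μ B) (measure_mono_ae (ae_le_set.mpr h))

/-- UMAS exclusion implies revealed preference: an expected-utility maximizer with
distinct positive decreasing utilities along her optimal list `P` of at most `K`
schools, who lists `d` but not `e`, must prefer `d` to `e` (`U_d > U_e`) whenever
(i) clearing the cutoff of `d` almost surely implies clearing that of `e`, and
(ii) replacing `d` by `e` changes at least one assignment probability. -/
theorem umas_exclusion_revealed_preference
    {Ω J : Type*} [MeasurableSpace Ω] [DecidableEq J]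
    (μ : Measure Ω) [IsProbabilityMeasure μ]
    (C : J → Ω → ℝ) (s : J → ℝ) (d₀ : J)
    (hmeas : ∀ j : J, MeasurableSet (clearSet C s j))
    (U : J → ℝ) (K : ℕ)
    (P : List J) (hPnd : P.Nodup) (hPne : P ≠ []) (hPK : P.length ≤ K)
    -- utilities along the list are strictly decreasing and positive
    (hUdec : ∀ u v : ℕ, u < v → v < P.length → U (P.getD v d₀) < U (P.getD u d₀))
    (hUpos : ∀ u : ℕ, u < P.length → 0 < U (P.getD u d₀))
    -- optimality of P among all feasible ranked lists
    (hopt : ∀ p : List J, p.Nodup → p ≠ [] → p.length ≤ K →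
      expUtil μ C s d₀ U p ≤ expUtil μ C s d₀ U P)
    (d e : J) (hd : d ∈ P) (he : e ∉ P)
    -- almost-sure containment: clearing d's cutoff implies clearing e's
    (hcontain : μ (clearSet C s d \ clearSet C s e) = 0)
    -- relevance: swapping e for d changes at least one assignment probability
    (hrel :
      (∃ u : ℕ, u < P.length ∧
          assignProb μ C s d₀ P u ≠
            assignProb μ C s d₀ (P.map fun x => if x = d then e else x) u) ∨
        outsideProb μ C s d₀ P ≠
          outsideProb μ C s d₀ (P.map fun x => if x = d then e else x)) :
    U e < U d := by
  classical
  set f : J → J := fun x => if x = d then e else x with hf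
  set Q : List J := P.map f with hQdef
  have hlenQ : Q.length = P.length := List.length_map _
  set n := P.idxOf d with hn
  have hnL : n < P.length := List.idxOf_lt_length_iff.mpr hd
  have hPn : P.getD n d₀ = d := by
    rw [List.getD_eq_getElem P d₀ hnL]; exact List.getElem_idxOf hnL
  have hPu : ∀ u, u < P.length → u ≠ n → P.getD u d₀ ≠ d := by
    intro u hu hun hcon
    rw [List.getD_eq_getElem P d₀ hu] at hcon
    exact hun ((List.Nodup.getElem_inj_iff hPnd).mp
      (by rw [hcon, ← hPn, List.getD_eq_getElem P d₀ hnL]))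
  have hQu : ∀ u, u < P.length → Q.getD u d₀ = if u = n then e else P.getD u d₀ := by
    intro u hu
    have huQ : u < Q.length := by rw [hlenQ]; exact hu
    rw [List.getD_eq_getElem Q d₀ huQ]
    simp only [hQdef, List.getElem_map]
    rw [← List.getD_eq_getElem P d₀ hu]
    by_cases hun : u = n
    · subst hun; rw [if_pos rfl, hPn, hf]; simp
    · rw [if_neg hun, hf]; simp only []
      exact if_neg (hPu u hu hun)
  have hQn : clearSet C s (Q.getD n d₀) = clearSet C s e := by
    rw [hQu n hnL, if_pos rfl]
  have hg : ∀ v, v ≠ n → clearSet C s (Q.getD v d₀) = clearSet C s (P.getD v d₀) := by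
    intro v hv
    by_cases hvL : v < P.length
    · rw [hQu v hvL, if_neg hv]
    · rw [List.getD_eq_default _ _ (by omega), List.getD_eq_default _ _ (by omega)]
  have hQnd : Q.Nodup := by
    refine List.Nodup.map_on ?_ hPnd
    intro x hx y hy hxy
    simp only [hf] at hxy
    split_ifs at hxy with h1 h2 h2
    · rw [h1, h2]
    · exact absurd (hxy ▸ hy) he
    · exact absurd (hxy ▸ hx) he
    · exact hxy
  have hQne : Q ≠ [] := by
    rw [hQdef]
    simp only [ne_eq, List.map_eq_nil_iff]
    exact hPne
  -- equality below position n
  have h1 : ∀ u, u < n → assignProb μ C s d₀ Q u = assignProb μ C s d₀ P u := by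
    intro u hu
    have hset : (⋂ v ∈ Finset.range u, (clearSet C s (Q.getD v d₀))ᶜ) ∩
        clearSet C s (Q.getD u d₀) =
        (⋂ v ∈ Finset.range u, (clearSet C s (P.getD v d₀))ᶜ) ∩
        clearSet C s (P.getD u d₀) := by
      rw [hg u (by omega)]
      congr 1
      exact Set.iInter₂_congr fun v hv => by
        rw [hg v (by have := Finset.mem_range.mp hv; omega)]
    unfold assignProb
    rw [hset]
  -- position n: P's prob ≤ Q's prob
  have h2 : assignProb μ C s d₀ P n ≤ assignProb μ C s d₀ Q n := by
    unfold assignProb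
    apply toReal_le_of_diff_null' μ
    apply measure_mono_null _ hcontain
    have hB : (⋂ v ∈ Finset.range n, (clearSet C s (Q.getD v d₀))ᶜ) =
        (⋂ v ∈ Finset.range n, (clearSet C s (P.getD v d₀))ᶜ) :=
      Set.iInter₂_congr fun v hv => by
        rw [hg v (by have := Finset.mem_range.mp hv; omega)]
    rw [hB, hQn, hPn]
    rintro x ⟨⟨hxB, hxD⟩, hx2⟩
    exact ⟨hxD, fun hE => hx2 ⟨hxB, hE⟩⟩
  -- positions after n: Q's prob ≤ P's prob
  have h3 : ∀ u, n < u → assignProb μ C s d₀ Q u ≤ assignProb μ C s d₀ P u := by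
    intro u hu
    unfold assignProb
    apply toReal_le_of_diff_null' μ
    apply measure_mono_null _ hcontain
    rintro x ⟨⟨hx1, hx2⟩, hx3⟩
    simp only [Set.mem_iInter, Set.mem_compl_iff] at hx1
    rw [hg u (by omega)] at hx2
    have hex : ¬ ∀ v, v ∈ Finset.range u → x ∉ clearSet C s (P.getD v d₀) := by
      intro h
      exact hx3 ⟨Set.mem_iInter₂.mpr h, hx2⟩
    push_neg at hex
    obtain ⟨v, hv, hxv⟩ := hex
    have hvn : v = n := by
      by_contra hne
      exact (hg v hne ▸ hx1 v hv) hxv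
    subst hvn
    refine ⟨hPn ▸ hxv, ?_⟩
    have := hx1 n (Finset.mem_range.mpr hu)
    rw [hQn] at this
    exact this
  -- outside option probabilities
  have h4 : outsideProb μ C s d₀ Q ≤ outsideProb μ C s d₀ P := by
    unfold outsideProb
    apply toReal_le_of_diff_null' μ
    apply measure_mono_null _ hcontain
    rintro x ⟨hx1, hx3⟩
    simp only [Set.mem_iInter, Set.mem_compl_iff] at hx1
    rw [hlenQ] at hx1
    have hex : ¬ ∀ v, v ∈ Finset.range P.length → x ∉ clearSet C s (P.getD v d₀) := by
      intro h
      exact hx3 (Set.mem_iInter₂.mpr h)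
    push_neg at hex
    obtain ⟨v, hv, hxv⟩ := hex
    have hvn : v = n := by
      by_contra hne
      exact (hg v hne ▸ hx1 v hv) hxv
    subst hvn
    refine ⟨hPn ▸ hxv, ?_⟩
    have := hx1 n (Finset.mem_range.mpr hnL)
    rw [hQn] at this
    exact this
  -- total probability identities
  have hsa : (∑ u ∈ Finset.range P.length, assignProb μ C s d₀ P u) +
      outsideProb μ C s d₀ P = 1 :=
    partition_sum_real' μ (fun v => clearSet C s (P.getD v d₀)) (fun v => hmeas _) P.length
  have hsb : (∑ u ∈ Finset.range P.length, assignProb μ C s d₀ Q u) +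
      outsideProb μ C s d₀ Q = 1 := by
    have h := partition_sum_real' μ (fun v => clearSet C s (Q.getD v d₀))
      (fun v => hmeas _) Q.length
    rw [hlenQ] at h
    have hob : outsideProb μ C s d₀ Q =
        (μ (⋂ v ∈ Finset.range P.length, (clearSet C s (Q.getD v d₀))ᶜ)).toReal := by
      unfold outsideProb; rw [hlenQ]
    rw [hob]
    exact h
  have hsplit : ∀ (F : ℕ → ℝ), ∑ u ∈ Finset.range P.length, F u =
      (∑ u ∈ Finset.range n, F u) + F n + ∑ u ∈ Finset.Ico (n+1) P.length, F u := by
    intro F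
    rw [← Finset.sum_range_add_sum_Ico F (show n+1 ≤ P.length from hnL), Finset.sum_range_succ]
  -- balance equation
  have hsums : ∑ u ∈ Finset.range n, assignProb μ C s d₀ Q u =
      ∑ u ∈ Finset.range n, assignProb μ C s d₀ P u :=
    Finset.sum_congr rfl fun u hu => h1 u (Finset.mem_range.mp hu)
  rw [hsplit] at hsa hsb
  rw [hsums] at hsb
  -- expected utility decompositions
  have hEP : expUtil μ C s d₀ U P =
      (∑ u ∈ Finset.range n, U (P.getD u d₀) * assignProb μ C s d₀ P u) +
        U d * assignProb μ C s d₀ P n +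
        ∑ u ∈ Finset.Ico (n+1) P.length, U (P.getD u d₀) * assignProb μ C s d₀ P u := by
    unfold expUtil; rw [hsplit, hPn]
  have hEQ : expUtil μ C s d₀ U Q =
      (∑ u ∈ Finset.range n, U (P.getD u d₀) * assignProb μ C s d₀ P u) +
        U e * assignProb μ C s d₀ Q n +
        ∑ u ∈ Finset.Ico (n+1) P.length, U (P.getD u d₀) * assignProb μ C s d₀ Q u := by
    unfold expUtil
    rw [hlenQ, hsplit]
    congr 1
    congr 1
    · refine Finset.sum_congr rfl fun u hu => ?_
      have huu := Finset.mem_range.mp hu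
      rw [hQu u (by omega), if_neg (by omega), h1 u huu]
    · rw [hQu n hnL, if_pos rfl]
    · refine Finset.sum_congr rfl fun u hu => ?_
      have huu := Finset.mem_Ico.mp hu
      rw [hQu u huu.2, if_neg (by omega)]
  -- positivity facts
  have hUd : 0 < U d := hPn ▸ hUpos n hnL
  have hbn0 : 0 ≤ assignProb μ C s d₀ Q n := ENNReal.toReal_nonneg
  have hcoef : ∀ u ∈ Finset.Ico (n+1) P.length, U (P.getD u d₀) < U d := by
    intro u hu
    have huu := Finset.mem_Ico.mp hu
    have := hUdec n u (by omega) huu.2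
    rwa [hPn] at this
  have hterm : ∀ u ∈ Finset.Ico (n+1) P.length,
      U (P.getD u d₀) * (assignProb μ C s d₀ P u - assignProb μ C s d₀ Q u) ≤
        U d * (assignProb μ C s d₀ P u - assignProb μ C s d₀ Q u) := by
    intro u hu
    have huu := Finset.mem_Ico.mp hu
    exact mul_le_mul_of_nonneg_right (hcoef u hu).le
      (sub_nonneg.mpr (h3 u (by omega)))
  -- the two sum identities
  have hS2 : ∑ u ∈ Finset.Ico (n+1) P.length,
      U (P.getD u d₀) * (assignProb μ C s d₀ P u - assignProb μ C s d₀ Q u) =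
      (∑ u ∈ Finset.Ico (n+1) P.length, U (P.getD u d₀) * assignProb μ C s d₀ P u) -
      ∑ u ∈ Finset.Ico (n+1) P.length, U (P.getD u d₀) * assignProb μ C s d₀ Q u := by
    simp only [mul_sub]; exact Finset.sum_sub_distrib _ _
  have hS3 : ∑ u ∈ Finset.Ico (n+1) P.length,
      U d * (assignProb μ C s d₀ P u - assignProb μ C s d₀ Q u) =
      U d * ((∑ u ∈ Finset.Ico (n+1) P.length, assignProb μ C s d₀ P u) -
        ∑ u ∈ Finset.Ico (n+1) P.length, assignProb μ C s d₀ Q u) := by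
    rw [← Finset.mul_sum, Finset.sum_sub_distrib]
  -- optimality
  have hQle : expUtil μ C s d₀ U Q ≤ expUtil μ C s d₀ U P :=
    hopt Q hQnd hQne (hlenQ ▸ hPK)
  by_contra hc
  push_neg at hc
  have hUebn : U d * assignProb μ C s d₀ Q n ≤ U e * assignProb μ C s d₀ Q n :=
    mul_le_mul_of_nonneg_right hc hbn0
  have hmulbn : U d * assignProb μ C s d₀ Q n = U d * assignProb μ C s d₀ P n +
      U d * ((∑ u ∈ Finset.Ico (n+1) P.length, assignProb μ C s d₀ P u) -
        ∑ u ∈ Finset.Ico (n+1) P.length, assignProb μ C s d₀ Q u) +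
      U d * (outsideProb μ C s d₀ P - outsideProb μ C s d₀ Q) := by
    have hb : assignProb μ C s d₀ Q n = assignProb μ C s d₀ P n +
        ((∑ u ∈ Finset.Ico (n+1) P.length, assignProb μ C s d₀ P u) -
          ∑ u ∈ Finset.Ico (n+1) P.length, assignProb μ C s d₀ Q u) +
        (outsideProb μ C s d₀ P - outsideProb μ C s d₀ Q) := by linarith
    rw [hb]; ring
  have hoo : 0 ≤ U d * (outsideProb μ C s d₀ P - outsideProb μ C s d₀ Q) :=
    mul_nonneg hUd.le (by linarith)
  -- strictness: produce either a strict Ico term or a strict outside gap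
  have hstrict : (∃ u ∈ Finset.Ico (n+1) P.length,
      assignProb μ C s d₀ Q u < assignProb μ C s d₀ P u) ∨
      outsideProb μ C s d₀ Q < outsideProb μ C s d₀ P := by
    rcases hrel with ⟨u, huL, hne⟩ | hne
    · rcases lt_trichotomy u n with h | h | h
      · exact absurd (h1 u h).symm hne
      · subst h
        have han : assignProb μ C s d₀ P n < assignProb μ C s d₀ Q n :=
          lt_of_le_of_ne h2 hne
        by_cases hob : outsideProb μ C s d₀ Q < outsideProb μ C s d₀ P
        · exact Or.inr hob
        · have hoa : outsideProb μ C s d₀ P = outsideProb μ C s d₀ Q :=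
            le_antisymm (not_lt.mp hob) h4
          left
          by_contra hno
          push_neg at hno
          have : (∑ v ∈ Finset.Ico (n+1) P.length, assignProb μ C s d₀ P v) ≤
              ∑ v ∈ Finset.Ico (n+1) P.length, assignProb μ C s d₀ Q v :=
            Finset.sum_le_sum hno
          linarith
      · exact Or.inl ⟨u, Finset.mem_Ico.mpr ⟨h, huL⟩,
          lt_of_le_of_ne (h3 u h) hne.symm⟩
    · exact Or.inr (lt_of_le_of_ne h4 hne.symm)
  rcases hstrict with ⟨u, hu, hab⟩ | hob
  · -- strict term in the tail sum
    have hlt : ∑ v ∈ Finset.Ico (n+1) P.length,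
        U (P.getD v d₀) * (assignProb μ C s d₀ P v - assignProb μ C s d₀ Q v) <
        ∑ v ∈ Finset.Ico (n+1) P.length,
        U d * (assignProb μ C s d₀ P v - assignProb μ C s d₀ Q v) :=
      Finset.sum_lt_sum hterm ⟨u, hu,
        mul_lt_mul_of_pos_right (hcoef u hu) (sub_pos.mpr hab)⟩
    rw [hS2, hS3] at hlt
    linarith
  · have : 0 < U d * (outsideProb μ C s d₀ P - outsideProb μ C s d₀ Q) :=
      mul_pos hUd (by linarith)
    have hle : ∑ v ∈ Finset.Ico (n+1) P.length,
        U (P.getD v d₀) * (assignProb μ C s d₀ P v - assignProb μ C s d₀ Q v) ≤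
        ∑ v ∈ Finset.Ico (n+1) P.length,
        U d * (assignProb μ C s d₀ P v - assignProb μ C s d₀ Q v) :=
      Finset.sum_le_sum hterm
    rw [hS2, hS3] at hle
    linarith
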